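/- arXiv:1011.5737 — 2 statements merged into one kernel-verified Lean document; each statement's English description precedes it below -/
import Mathlib

section
/- Let G' be a chordal graph, e = uv an edge of G' such that u and v have no two non-adjacent common neighbours in G'. Then G' − e is chordal. -/
open SimpleGraph

/-- `f : ZMod n → V` traces an induced cycle of length `n` in `G`:
`f` is injective and adjacency holds exactly between consecutive vertices. -/
def IsInducedCycle {V : Type*} (G : SimpleGraph V) (n : ℕ) (f : ZMod n → V) : Prop :=
  Function.Injective f ∧ ∀ i j : ZMod n, G.Adj (f i) (f j) ↔ (j = i + 1 ∨ i = j + 1)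

/-- A graph is chordal if it has no induced cycle of length at least 4. -/
def Chordal {V : Type*} (G : SimpleGraph V) : Prop :=
  ∀ n, 4 ≤ n → ∀ f : ZMod n → V, ¬ IsInducedCycle G n f

/-- `G'` is a chordal completion of `G`. -/
def ChordalCompletion {V : Type*} (G G' : SimpleGraph V) : Prop :=
  Chordal G' ∧ G ≤ G'

/-- Minimal chordal completion: no proper spanning subgraph containing `G` is chordal. -/
def MinimalChordalCompletion {V : Type*} (G G' : SimpleGraph V) : Prop :=
  ChordalCompletion G G' ∧ ∀ H, ChordalCompletion G H → H ≤ G' → H = G'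

lemma shrink_aux {V : Type*} (G' : SimpleGraph V) {u v : V} (huv : G'.Adj u v)
    {n : ℕ} (hn : 4 ≤ n) {f : ZMod n → V}
    (hf : IsInducedCycle (G'.deleteEdges {s(u, v)}) n f)
    {i j : ZMod n} (hu : f i = u) (hv : f j = v) :
    2 ≤ (j - i).val ∧ (j - i).val ≤ n - 2 ∧
      IsInducedCycle G' ((j - i).val + 1) (fun k => f (i + ((k.val : ℕ) : ZMod n))) := by
  haveI : NeZero n := ⟨by omega⟩
  have hinj := hf.1
  have hadjiff := hf.2
  have huvne : u ≠ v := huv.ne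
  have hij : i ≠ j := fun hh => huvne (by rw [← hu, ← hv, hh])
  have hnadj : ¬ (G'.deleteEdges {s(u,v)}).Adj (f i) (f j) := by
    rw [hu, hv]; simp
  have hne1 : j ≠ i + 1 := fun hh => hnadj ((hadjiff i j).mpr (Or.inl hh))
  have hne2 : i ≠ j + 1 := fun hh => hnadj ((hadjiff i j).mpr (Or.inr hh))
  set d := (j - i).val with hd
  have hdn : d < n := ZMod.val_lt _
  have hcastd : ((d : ℕ) : ZMod n) = j - i := ZMod.natCast_rightInverse _
  have hd0 : d ≠ 0 := by
    intro hh
    rw [hh] at hcastd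
    exact hij (sub_eq_zero.mp (by simpa using hcastd.symm)).symm
  have hd1 : d ≠ 1 := by
    intro hh
    rw [hh] at hcastd
    apply hne1
    have : j - i = 1 := by simpa using hcastd.symm
    rw [← this]; ring
  have hdtop : d ≠ n - 1 := by
    intro hh
    rw [hh] at hcastd
    apply hne2
    have hcast' : ((n - 1 : ℕ) : ZMod n) = -1 := by
      have : ((n - 1 : ℕ) : ZMod n) = (n : ZMod n) - 1 := by
        push_cast [Nat.cast_sub (by omega : 1 ≤ n)]; ring
      rw [this, ZMod.natCast_self]; ring
    rw [hcast'] at hcastd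
    have : i - j = 1 := by rw [← neg_sub j i, ← hcastd]; ring
    rw [← this]; ring
  have hd2 : 2 ≤ d := by omega
  have hdle : d ≤ n - 2 := by omega
  refine ⟨hd2, hdle, ?_, ?_⟩
  · -- injectivity
    intro a b hab
    have h1 : i + ((a.val : ℕ) : ZMod n) = i + ((b.val : ℕ) : ZMod n) := hinj hab
    have h2 : ((a.val : ℕ) : ZMod n) = ((b.val : ℕ) : ZMod n) := by
      exact add_left_cancel h1
    have ha' : a.val < n := lt_of_lt_of_le a.val_lt (by omega)
    have hb' : b.val < n := lt_of_lt_of_le b.val_lt (by omega)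
    have : a.val = b.val := by
      have := congrArg ZMod.val h2
      rwa [ZMod.val_cast_of_lt ha', ZMod.val_cast_of_lt hb'] at this
    calc a = ((a.val : ℕ) : ZMod (d+1)) := (ZMod.natCast_rightInverse a).symm
      _ = ((b.val : ℕ) : ZMod (d+1)) := by rw [this]
      _ = b := ZMod.natCast_rightInverse b
  · -- adjacency iff
    have hcastk : ∀ k : ZMod (d+1), ((k.val : ℕ) : ZMod n).val = k.val :=
      fun k => ZMod.val_cast_of_lt (lt_of_lt_of_le k.val_lt (by omega))
    have hui : ∀ k : ZMod (d+1), f (i + ((k.val : ℕ) : ZMod n)) = u → k = 0 := by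
      intro k hk
      have : i + ((k.val : ℕ) : ZMod n) = i := hinj (by rw [hk, hu])
      have h0 : ((k.val : ℕ) : ZMod n) = 0 := by
        have := congrArg (· - i) this; simpa using this
      have : k.val = 0 := by
        have := congrArg ZMod.val h0; rwa [hcastk, ZMod.val_zero] at this
      exact (ZMod.val_eq_zero k).mp this
    have hvj : ∀ k : ZMod (d+1), f (i + ((k.val : ℕ) : ZMod n)) = v → k.val = d := by
      intro k hk
      have : i + ((k.val : ℕ) : ZMod n) = j := hinj (by rw [hk, hv])
      have h0 : ((k.val : ℕ) : ZMod n) = j - i := by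
        rw [← this]; ring
      have := congrArg ZMod.val h0; rwa [hcastk] at this
    have hgd : ∀ k : ZMod (d+1), k.val = d → f (i + ((k.val : ℕ) : ZMod n)) = v := by
      intro k hk
      rw [hk, hcastd, show i + (j - i) = j from by ring, hv]
    have hg0 : ∀ k : ZMod (d+1), k = 0 → f (i + ((k.val : ℕ) : ZMod n)) = u := by
      intro k hk; rw [hk]; simpa using hu
    haveI : Fact (1 < d + 1) := ⟨by omega⟩
    -- key: consecutive implies adjacent
    have key : ∀ a b : ZMod (d+1), b = a + 1 →
        G'.Adj (f (i + ((a.val : ℕ) : ZMod n))) (f (i + ((b.val : ℕ) : ZMod n))) := by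
      intro a b hb
      by_cases had : a.val = d
      · have ha' : a = ((d : ℕ) : ZMod (d+1)) := by
          have hri := ZMod.natCast_rightInverse a
          rw [had] at hri; exact hri.symm
        have hb0 : b = 0 := by
          rw [hb, ha', ← Nat.cast_succ, ZMod.natCast_self]
        rw [hgd a had, hg0 b hb0]
        exact huv.symm
      · have halt : a.val < d := lt_of_le_of_ne (by have := a.val_lt; omega) had
        have hbv : b.val = a.val + 1 := by
          rw [hb, ZMod.val_add_of_lt (by rw [ZMod.val_one]; omega), ZMod.val_one]
        apply SimpleGraph.deleteEdges_le {s(u,v)}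
        have hrw : ((b.val : ℕ) : ZMod n) = ((a.val : ℕ) : ZMod n) + 1 := by
          rw [hbv]; push_cast; ring
        rw [hrw, ← add_assoc]
        exact (hadjiff _ _).mpr (Or.inl rfl)
    intro a b
    constructor
    · intro hAdj
      by_cases hsym : s(f (i + ((a.val : ℕ) : ZMod n)), f (i + ((b.val : ℕ) : ZMod n))) = s(u, v)
      · rw [Sym2.eq_iff] at hsym
        rcases hsym with ⟨ha, hb⟩ | ⟨ha, hb⟩
        · right
          have ha0 : a = 0 := hui a ha
          have hbd : b.val = d := hvj b hb
          have hb' : b = ((d : ℕ) : ZMod (d+1)) := by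
            have hri := ZMod.natCast_rightInverse b
            rw [hbd] at hri; exact hri.symm
          rw [ha0, hb', ← Nat.cast_succ, ZMod.natCast_self]
        · left
          have hb0 : b = 0 := hui b hb
          have had : a.val = d := hvj a ha
          have ha' : a = ((d : ℕ) : ZMod (d+1)) := by
            have hri := ZMod.natCast_rightInverse a
            rw [had] at hri; exact hri.symm
          rw [hb0, ha', ← Nat.cast_succ, ZMod.natCast_self]
      · have hdel : (G'.deleteEdges {s(u,v)}).Adj (f (i + ((a.val : ℕ) : ZMod n)))
            (f (i + ((b.val : ℕ) : ZMod n))) := by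
          rw [SimpleGraph.deleteEdges_adj]
          exact ⟨hAdj, by simpa using hsym⟩
        have hcons := (hadjiff _ _).mp hdel
        have hstep : ∀ a b : ZMod (d+1),
            i + ((b.val : ℕ) : ZMod n) = i + ((a.val : ℕ) : ZMod n) + 1 → b = a + 1 := by
          intro a b hh
          have h2 : ((b.val : ℕ) : ZMod n) = ((a.val + 1 : ℕ) : ZMod n) := by
            have := congrArg (· - i) hh
            push_cast
            simpa [add_assoc] using this
          have hv2 : b.val = a.val + 1 := by
            have := congrArg ZMod.val h2
            rwa [hcastk, ZMod.val_cast_of_lt (by have := a.val_lt; omega)] at this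
          calc b = ((b.val : ℕ) : ZMod (d+1)) := (ZMod.natCast_rightInverse b).symm
            _ = ((a.val : ℕ) : ZMod (d+1)) + 1 := by rw [hv2]; push_cast; ring
            _ = a + 1 := by rw [ZMod.natCast_rightInverse a]
        rcases hcons with hc | hc
        · exact Or.inl (hstep a b hc)
        · exact Or.inr (hstep b a hc)
    · rintro (hb | ha)
      · exact key a b hb
      · exact (key b a ha).symm

theorem stmt_17 {V : Type*} (G' : SimpleGraph V) (hG : Chordal G')
    (u v : V) (huv : G'.Adj u v)
    (h : ∀ x y : V, G'.Adj u x → G'.Adj v x → G'.Adj u y → G'.Adj v y →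
      x ≠ y → G'.Adj x y) :
    Chordal (G'.deleteEdges {s(u, v)}) := by
  intro n hn f hf
  haveI : NeZero n := ⟨by omega⟩
  have hinj := hf.1
  have hadjiff := hf.2
  -- Case: u or v is not on the cycle
  by_cases hu : ∃ i, f i = u
  case neg =>
    apply hG n hn f
    refine ⟨hinj, fun a b => ?_⟩
    rw [← hadjiff a b, SimpleGraph.deleteEdges_adj]
    constructor
    · exact fun hh => ⟨hh, by
        simp only [Set.mem_singleton_iff, Sym2.eq_iff]
        rintro (⟨h1, h2⟩ | ⟨h1, h2⟩)
        · exact hu ⟨a, h1⟩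
        · exact hu ⟨b, h2⟩⟩
    · exact fun hh => hh.1
  by_cases hv : ∃ j, f j = v
  case neg =>
    apply hG n hn f
    refine ⟨hinj, fun a b => ?_⟩
    rw [← hadjiff a b, SimpleGraph.deleteEdges_adj]
    constructor
    · exact fun hh => ⟨hh, by
        simp only [Set.mem_singleton_iff, Sym2.eq_iff]
        rintro (⟨h1, h2⟩ | ⟨h1, h2⟩)
        · exact hv ⟨b, h2⟩
        · exact hv ⟨a, h1⟩⟩
    · exact fun hh => hh.1
  obtain ⟨i, hi⟩ := hu
  obtain ⟨j, hj⟩ := hv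
  -- apply shrink twice
  have H1 := shrink_aux G' huv hn hf hi hj
  have hf' : IsInducedCycle (G'.deleteEdges {s(v, u)}) n f := by
    rwa [Sym2.eq_swap]
  have H2 := shrink_aux G' huv.symm hn hf' hj hi
  set d1 := (j - i).val with hd1
  set d2 := (i - j).val with hd2
  have hd1eq : d1 = 2 := by
    by_contra hne
    have h4 : 4 ≤ d1 + 1 := by omega
    exact hG (d1 + 1) h4 _ H1.2.2
  have hd2eq : d2 = 2 := by
    by_contra hne
    have h4 : 4 ≤ d2 + 1 := by omega
    exact hG (d2 + 1) h4 _ H2.2.2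
  -- d1 + d2 = n
  have hsum : n = 4 := by
    have hne0 : (j - i) ≠ 0 := by
      intro hh
      have : d1 = 0 := by rw [hd1, hh]; simp
      omega
    haveI : NeZero (j - i) := ⟨hne0⟩
    have : (-(j - i)).val = n - (j - i).val := ZMod.val_neg_of_ne_zero (j - i)
    rw [neg_sub] at this
    rw [← hd2, ← hd1] at this
    omega
  subst hsum
  -- now n = 4, j = i + 2
  have hji : j = i + 2 := by
    have : ((d1 : ℕ) : ZMod 4) = j - i := ZMod.natCast_rightInverse _
    rw [hd1eq] at this
    have : j - i = 2 := by rw [← this]; norm_num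
    rw [← this]; ring
  set x := f (i + 1) with hx
  set y := f (i + 3) with hy
  have hle : G'.deleteEdges {s(u,v)} ≤ G' := SimpleGraph.deleteEdges_le _
  have hux : G'.Adj u x := by
    rw [← hi]; exact hle ((hadjiff i (i+1)).mpr (Or.inl rfl))
  have hvx : G'.Adj v x := by
    rw [← hj, hji]
    exact hle ((hadjiff (i+2) (i+1)).mpr (Or.inr (by ring)))
  have huy : G'.Adj u y := by
    rw [← hi]
    refine hle ((hadjiff i (i+3)).mpr (Or.inr ?_))
    have h34 : (3 : ZMod 4) + 1 = 0 := by decide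
    rw [add_assoc, h34, add_zero]
  have hvy : G'.Adj v y := by
    rw [← hj, hji]
    exact hle ((hadjiff (i+2) (i+3)).mpr (Or.inl (by ring)))
  have hxy : x ≠ y := by
    intro hh
    have := hinj hh
    have : (1 : ZMod 4) = 3 := by
      have := congrArg (· - i) this; simpa using this
    exact absurd this (by decide)
  have hAdjxy := h x y hux hvx huy hvy hxy
  -- x, y differ from u and v
  have hxu : x ≠ u := by
    intro hh; rw [← hi] at hh
    have := congrArg (· - i) (hinj hh)
    simp at this
    exact absurd this (by decide)
  have hxv : x ≠ v := by
    intro hh; rw [← hj, hji] at hh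
    have := congrArg (· - i) (hinj hh)
    simp at this
    exact absurd this (by decide)
  have hdel : (G'.deleteEdges {s(u,v)}).Adj x y := by
    rw [SimpleGraph.deleteEdges_adj]
    refine ⟨hAdjxy, ?_⟩
    simp only [Set.mem_singleton_iff, Sym2.eq_iff]
    rintro (⟨h1, h2⟩ | ⟨h1, h2⟩)
    · exact hxu h1
    · exact hxv h1
  have := (hadjiff (i+1) (i+3)).mp hdel
  rcases this with hc | hc
  · have := congrArg (· - i) hc
    simp [add_assoc] at this
    exact absurd this (by decide)
  · have := congrArg (· - i) hc
    simp [add_assoc] at this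
    exact absurd this (by decide)
end

section
/- Let G be a graph and G' a chordal completion of G that is not minimal. Then there exists an edge e ∈ E(G') \ E(G) such that G' − e is still chordal. -/
open SimpleGraph

/-! ### Auxiliary machinery -/

section Aux

variable {V : Type*}

/-- Build an induced cycle (hence refute chordality) from a cyclically arranged
list of vertices given as `q 0, q 1, ..., q (m-1)`. -/
lemma not_chordal_of_cycle (G : SimpleGraph V) (m : ℕ) (hm : 4 ≤ m) (q : ℕ → V)
    (hinj : ∀ a b, a < m → b < m → q a = q b → a = b)
    (hadj : ∀ t, t + 1 < m → G.Adj (q t) (q (t + 1)))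
    (hclose : G.Adj (q (m - 1)) (q 0))
    (hnon : ∀ a b, a + 2 ≤ b → b < m → ¬(a = 0 ∧ b = m - 1) → ¬ G.Adj (q a) (q b)) :
    ¬ Chordal G := by
  intro hch
  haveI : NeZero m := ⟨by omega⟩
  haveI : Fact (1 < m) := ⟨by omega⟩
  -- the helper: (i+1).val = (i.val + 1) % m
  have hsucc : ∀ i : ZMod m, (i + 1).val = (i.val + 1) % m := by
    intro i
    rw [ZMod.val_add, ZMod.val_one]
  apply hch m hm (fun i => q i.val)
  constructor
  · intro i j hij
    exact ZMod.val_injective m (hinj i.val j.val (ZMod.val_lt i) (ZMod.val_lt j) hij)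
  · intro i j
    show G.Adj (q i.val) (q j.val) ↔ _
    have ha : i.val < m := ZMod.val_lt i
    have hb : j.val < m := ZMod.val_lt j
    have e1 : (j = i + 1) ↔ (j.val = (i.val + 1) % m) := by
      constructor
      · intro h; rw [h]; exact hsucc i
      · intro h; apply ZMod.val_injective m; rw [hsucc i]; exact h
    have e2 : (i = j + 1) ↔ (i.val = (j.val + 1) % m) := by
      constructor
      · intro h; rw [h]; exact hsucc j
      · intro h; apply ZMod.val_injective m; rw [hsucc j]; exact h
    rw [e1, e2]
    constructor
    · intro hAdj
      by_contra hcon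
      push_neg at hcon
      obtain ⟨h1, h2⟩ := hcon
      rcases Nat.lt_trichotomy i.val j.val with hlt | heq | hgt
      · -- i.val < j.val
        have hne1 : j.val ≠ i.val + 1 := by
          intro h
          apply h1
          rw [h, Nat.mod_eq_of_lt (by omega)]
        have hne2 : ¬ (i.val = 0 ∧ j.val = m - 1) := by
          rintro ⟨h0, hm1⟩
          apply h2
          rw [h0, hm1]
          have : m - 1 + 1 = m := by omega
          rw [this, Nat.mod_self]
        exact hnon i.val j.val (by omega) hb hne2 hAdj
      · rw [heq] at hAdj
        exact G.irrefl hAdj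
      · -- j.val < i.val
        have hne1 : i.val ≠ j.val + 1 := by
          intro h
          apply h2
          rw [h, Nat.mod_eq_of_lt (by omega)]
        have hne2 : ¬ (j.val = 0 ∧ i.val = m - 1) := by
          rintro ⟨h0, hm1⟩
          apply h1
          rw [h0, hm1]
          have : m - 1 + 1 = m := by omega
          rw [this, Nat.mod_self]
        exact hnon j.val i.val (by omega) ha hne2 hAdj.symm
    · intro h
      rcases h with h | h
      · by_cases hc : i.val + 1 < m
        · have : j.val = i.val + 1 := by rwa [Nat.mod_eq_of_lt hc] at h
          rw [this]
          exact hadj i.val hc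
        · have him : i.val = m - 1 := by omega
          have : j.val = 0 := by
            rw [him] at h
            have : m - 1 + 1 = m := by omega
            rwa [this, Nat.mod_self] at h
          rw [this, him]
          exact hclose
      · by_cases hc : j.val + 1 < m
        · have : i.val = j.val + 1 := by rwa [Nat.mod_eq_of_lt hc] at h
          rw [this]
          exact (hadj j.val hc).symm
        · have hjm : j.val = m - 1 := by omega
          have : i.val = 0 := by
            rw [hjm] at h
            have : m - 1 + 1 = m := by omega
            rwa [this, Nat.mod_self] at h
          rw [this, hjm]
          exact hclose.symm

end Aux
section Fan

variable {V : Type*}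

/-- Fan lemma: if `p 0, ..., p k` is an induced path in a chordal graph `H` and `s`
(not on the path) is adjacent to both endpoints, then `s` is adjacent to every path vertex. -/
lemma fan_lemma {H : SimpleGraph V} (hH : Chordal H) :
    ∀ k, 1 ≤ k → ∀ (p : ℕ → V) (s : V),
      (∀ a b, a ≤ k → b ≤ k → p a = p b → a = b) →
      (∀ t, t < k → H.Adj (p t) (p (t + 1))) →
      (∀ a b, a + 2 ≤ b → b ≤ k → ¬ H.Adj (p a) (p b)) →
      (∀ t, t ≤ k → s ≠ p t) →
      H.Adj s (p 0) → H.Adj s (p k) → ∀ t, t ≤ k → H.Adj s (p t) := by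
  intro k
  induction k using Nat.strong_induction_on with
  | _ k IH =>
    intro hk p s hpinj hpadj hpnon hs h0 hk'
    rcases eq_or_lt_of_le hk with h1 | h2
    · -- k = 1
      intro t ht
      rw [← h1] at ht hk'
      interval_cases t
      · exact h0
      · exact hk'
    · -- 2 ≤ k
      have hs1 : H.Adj s (p 1) := by
        by_contra hns1
        set J := {t : ℕ | 2 ≤ t ∧ t ≤ k ∧ H.Adj s (p t)} with hJ
        have hJne : J.Nonempty := ⟨k, by omega, le_refl _, hk'⟩
        have hjJ : sInf J ∈ J := Nat.sInf_mem hJne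
        set j := sInf J with hj
        obtain ⟨hj2, hjk, hjadj⟩ := hjJ
        -- build induced cycle s, p 0, p 1, ..., p j
        set m := j + 2 with hmdef
        set q : ℕ → V := fun t => if t = 0 then s else p (t - 1) with hq
        have hqinj : ∀ a b, a < m → b < m → q a = q b → a = b := by
          intro a b hA hB hab
          rcases Nat.eq_zero_or_pos a with rfl | hA0
          · rcases Nat.eq_zero_or_pos b with rfl | hB0
            · rfl
            · exfalso
              simp only [hq, if_pos rfl, if_neg (by omega : b ≠ 0)] at hab
              exact hs (b - 1) (by omega) hab
          · rcases Nat.eq_zero_or_pos b with rfl | hB0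
            · exfalso
              simp only [hq, if_pos rfl, if_neg (by omega : a ≠ 0)] at hab
              exact hs (a - 1) (by omega) hab.symm
            · simp only [hq, if_neg (by omega : a ≠ 0), if_neg (by omega : b ≠ 0)] at hab
              have := hpinj (a - 1) (b - 1) (by omega) (by omega) hab
              omega
        have hqadj : ∀ t, t + 1 < m → H.Adj (q t) (q (t + 1)) := by
          intro t ht
          rcases Nat.eq_zero_or_pos t with rfl | ht0
          · simpa [hq] using h0
          · simp only [hq, if_neg (by omega : t ≠ 0), if_neg (by omega : t + 1 ≠ 0)]
            have h' := hpadj (t - 1) (by omega)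
            have : t - 1 + 1 = t + 1 - 1 := by omega
            rwa [this] at h'
        have hqclose : H.Adj (q (m - 1)) (q 0) := by
          simp only [hq, if_neg (by omega : m - 1 ≠ 0), if_pos rfl]
          have : m - 1 - 1 = j := by omega
          rw [this]
          exact hjadj.symm
        have hqnon : ∀ a b, a + 2 ≤ b → b < m → ¬(a = 0 ∧ b = m - 1) → ¬ H.Adj (q a) (q b) := by
          intro a b hab hbm hne
          rcases Nat.eq_zero_or_pos a with rfl | hA0
          · -- pair (s, p (b-1)), with 2 ≤ b ≤ j (b ≠ j+1 by hne)
            simp only [hq, if_pos rfl, if_neg (by omega : b ≠ 0)]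
            have hbj : b ≤ j := by
              rcases Nat.lt_or_ge b (j + 1) with h | h
              · omega
              · exfalso; exact hne ⟨rfl, by omega⟩
            rcases Nat.lt_or_ge (b - 1) 2 with hb1 | hb2
            · have : b - 1 = 1 := by omega
              rw [this]; exact hns1
            · intro hadJ
              have hmem : (b - 1) ∈ J := ⟨hb2, by omega, hadJ⟩
              have := Nat.sInf_le hmem
              omega
          · simp only [hq, if_neg (by omega : a ≠ 0), if_neg (by omega : b ≠ 0)]
            exact hpnon (a - 1) (b - 1) (by omega) (by omega)
        exact not_chordal_of_cycle H m (by omega) q hqinj hqadj hqclose hqnon hH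
      -- now shift the path by one and use the induction hypothesis
      have main := IH (k - 1) (by omega) (by omega) (fun t => p (t + 1)) s
        (fun a b haa hbb hab => by
          have := hpinj (a + 1) (b + 1) (by omega) (by omega) hab
          omega)
        (fun t ht => hpadj (t + 1) (by omega))
        (fun a b hab hbb => hpnon (a + 1) (b + 1) (by omega) (by omega))
        (fun t ht => hs (t + 1) (by omega))
        hs1
        (by
          show H.Adj s (p (k - 1 + 1))
          have : k - 1 + 1 = k := by omega
          rw [this]; exact hk')
      intro t ht
      rcases Nat.eq_zero_or_pos t with rfl | htpos
      · exact h0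
      · have h' : H.Adj s (p (t - 1 + 1)) := main (t - 1) (by omega)
        have : t - 1 + 1 = t := by omega
        rwa [this] at h'

end Fan
section Core

variable {V : Type*} [Fintype V]

lemma addition_core {G' H : SimpleGraph V} (hG' : Chordal G') (hH : Chordal H)
    (hle : H ≤ G') {u v : V} (hGuv : G'.Adj u v) (hHuv : ¬ H.Adj u v)
    (hmax : ∀ a b, G'.Adj a b → ¬ H.Adj a b →
      ((H.neighborSet a) ∩ (H.neighborSet b)).ncard ≤
        ((H.neighborSet u) ∩ (H.neighborSet v)).ncard)
    {n : ℕ} (hn4 : 4 ≤ n) {f : ZMod n → V}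
    (hfinj : Function.Injective f)
    (hfadj : ∀ i j : ZMod n,
      (H ⊔ fromEdgeSet {s(u, v)}).Adj (f i) (f j) ↔ (j = i + 1 ∨ i = j + 1))
    {i₀ : ZMod n} (hfu : f i₀ = u) (hfv : f (i₀ + 1) = v) : False := by
  haveI : NeZero n := ⟨by omega⟩
  set k := n - 1 with hkdef
  have hk3 : 3 ≤ k := by omega
  -- adjacency in `H ⊔ fromEdgeSet {s(u,v)}`
  have hH'iff : ∀ x y : V, (H ⊔ fromEdgeSet {s(u, v)}).Adj x y ↔
      (H.Adj x y ∨ ((x = u ∧ y = v) ∨ (x = v ∧ y = u))) := by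
    intro x y
    rw [sup_adj, fromEdgeSet_adj]
    constructor
    · rintro (h | ⟨hmem, hne⟩)
      · exact Or.inl h
      · simp only [Set.mem_singleton_iff, Sym2.eq_iff] at hmem
        exact Or.inr hmem
    · rintro (h | h)
      · exact Or.inl h
      · refine Or.inr ⟨?_, ?_⟩
        · simp only [Set.mem_singleton_iff, Sym2.eq_iff]
          exact h
        · rcases h with ⟨rfl, rfl⟩ | ⟨rfl, rfl⟩
          · exact hGuv.ne
          · exact hGuv.ne'
  -- cast helpers
  have hcast : ∀ a b : ℕ, a < n → b < n → ((a : ZMod n) = (b : ZMod n)) → a = b := by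
    intro a b ha hb h
    have := congrArg ZMod.val h
    rwa [ZMod.val_cast_of_lt ha, ZMod.val_cast_of_lt hb] at this
  set p : ℕ → V := fun t => f (i₀ + 1 + (t : ZMod n)) with hp
  have hp0 : p 0 = v := by simp only [hp, Nat.cast_zero, add_zero]; exact hfv
  have hcastk : ((k : ℕ) : ZMod n) + 1 = 0 := by
    have h1 : ((k : ℕ) : ZMod n) + 1 = ((k + 1 : ℕ) : ZMod n) := by push_cast; ring
    rw [h1, (by omega : k + 1 = n)]
    exact ZMod.natCast_self n
  have hpk : p k = u := by
    have h2 : (1 : ZMod n) + (k : ZMod n) = 0 := by rw [add_comm]; exact hcastk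
    simp only [hp]
    rw [add_assoc, h2, add_zero]
    exact hfu
  -- consecutive index translation
  have hconsec : ∀ a b : ℕ, a < n → b < n →
      ((i₀ + 1 + (b : ZMod n) = i₀ + 1 + (a : ZMod n) + 1) ↔ (b = a + 1 ∨ (a = k ∧ b = 0))) := by
    intro a b ha hb
    have hrw : (i₀ + 1 + (b : ZMod n) = i₀ + 1 + (a : ZMod n) + 1) ↔
        ((b : ZMod n) = (a : ZMod n) + 1) := by
      rw [add_assoc (i₀ + 1) ((a : ZMod n)) 1]
      exact add_right_inj (i₀ + 1)
    rw [hrw]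
    constructor
    · intro h
      by_cases hak : a = k
      · subst hak
        right
        refine ⟨rfl, ?_⟩
        apply hcast b 0 hb (by omega)
        rw [h, hcastk, Nat.cast_zero]
      · left
        have ha1 : a + 1 < n := by omega
        have hc : ((a : ZMod n) + 1) = ((a + 1 : ℕ) : ZMod n) := by push_cast; ring
        exact hcast b (a + 1) hb ha1 (by rw [h, hc])
    · rintro (rfl | ⟨rfl, rfl⟩)
      · push_cast; ring
      · rw [Nat.cast_zero]
        exact hcastk.symm
  -- path properties
  have hpinj : ∀ a b, a ≤ k → b ≤ k → p a = p b → a = b := by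
    intro a b ha hb h
    simp only [hp] at h
    have h2 := hfinj h
    have h3 : (a : ZMod n) = (b : ZMod n) := add_left_cancel h2
    exact hcast a b (by omega) (by omega) h3
  have hpadjH' : ∀ t, t < k → (H ⊔ fromEdgeSet {s(u, v)}).Adj (p t) (p (t + 1)) := by
    intro t ht
    apply (hfadj _ _).2
    left
    exact (hconsec t (t + 1) (by omega) (by omega)).2 (Or.inl rfl)
  have hpadjH : ∀ t, t < k → H.Adj (p t) (p (t + 1)) := by
    intro t ht
    have h' := (hH'iff _ _).1 (hpadjH' t ht)
    rcases h' with h | hcase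
    · exact h
    · exfalso
      rcases hcase with ⟨h1, h2⟩ | ⟨h1, h2⟩
      · have : t = k := hpinj t k (by omega) (le_refl _) (by rw [h1, hpk])
        omega
      · have ht0 : t = 0 := hpinj t 0 (by omega) (by omega) (by rw [h1, hp0])
        have ht1 : t + 1 = k := hpinj (t + 1) k (by omega) (le_refl _) (by rw [h2, hpk])
        omega
  have hpnonH' : ∀ a b, a + 2 ≤ b → b ≤ k → ¬(a = 0 ∧ b = k) →
      ¬ (H ⊔ fromEdgeSet {s(u, v)}).Adj (p a) (p b) := by
    intro a b hab hbk hne hadj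
    have h' := (hfadj _ _).1 hadj
    rcases h' with h | h
    · have := (hconsec a b (by omega) (by omega)).1 h
      rcases this with h' | ⟨h1, h2⟩ <;> omega
    · have := (hconsec b a (by omega) (by omega)).1 h
      rcases this with h' | ⟨h1, h2⟩
      · omega
      · exact hne ⟨h2, h1⟩
  have hpnon : ∀ a b, a + 2 ≤ b → b ≤ k → ¬ H.Adj (p a) (p b) := by
    intro a b hab hbk
    by_cases hc : a = 0 ∧ b = k
    · obtain ⟨rfl, rfl⟩ := hc
      rw [hp0, hpk]
      intro h
      exact hHuv h.symm
    · intro h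
      exact hpnonH' a b hab hbk hc ((hH'iff _ _).2 (Or.inl h))
  -- the common-neighbour set
  set S := (H.neighborSet u) ∩ (H.neighborSet v) with hSdef
  have hSmem : ∀ s ∈ S, H.Adj u s ∧ H.Adj v s := by
    intro s hs
    exact ⟨hs.1, hs.2⟩
  have hSnotp : ∀ s ∈ S, ∀ t, t ≤ k → s ≠ p t := by
    intro s hs t ht heq
    obtain ⟨hsu, hsv⟩ := hSmem s hs
    by_cases h2 : 2 ≤ t
    · apply hpnon 0 t (by omega) ht
      have : H.Adj (p 0) (p t) := by rw [hp0, ← heq]; exact hsv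
      exact this
    · apply hpnon t k (by omega) (le_refl _)
      have : H.Adj (p k) (p t) := by rw [hpk, ← heq]; exact hsu
      exact this.symm
  have hfan : ∀ s ∈ S, ∀ t, t ≤ k → H.Adj s (p t) := by
    intro s hs
    obtain ⟨hsu, hsv⟩ := hSmem s hs
    exact fan_lemma hH k (by omega) p s hpinj hpadjH hpnon (hSnotp s hs)
      (by rw [hp0]; exact hsv.symm) (by rw [hpk]; exact hsu.symm)
  -- G'-facts about the path
  have hpadjG : ∀ t, t < k → G'.Adj (p t) (p (t + 1)) := fun t ht => hle (hpadjH t ht)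
  have hpcloseG : G'.Adj (p k) (p 0) := by rw [hp0, hpk]; exact hGuv
  -- chords
  set A := {d : ℕ | 2 ≤ d ∧ ∃ a, a + d ≤ k ∧ ¬(a = 0 ∧ a + d = k) ∧ G'.Adj (p a) (p (a + d))}
    with hAdef
  by_cases hAne : A.Nonempty
  · -- there is a chord; take one of minimal span; it must have span 2
    have hd := Nat.sInf_mem hAne
    set d₀ := sInf A with hd₀def
    obtain ⟨hd2, a₀, ha₀k, ha₀ne, ha₀adj⟩ := hd
    have hd₀k : d₀ ≤ k := by omega
    by_cases hd₀2 : d₀ = 2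
    · -- ear found: the pair (p a₀, p (a₀+2)) beats (u,v), contradiction with maximality
      rw [hd₀2] at ha₀adj ha₀k
      have hHear : ¬ H.Adj (p a₀) (p (a₀ + 2)) := hpnon a₀ (a₀ + 2) (by omega) ha₀k
      have hmax' := hmax (p a₀) (p (a₀ + 2)) ha₀adj hHear
      set w := p (a₀ + 1) with hwdef
      have hwadj1 : H.Adj w (p a₀) := (hpadjH a₀ (by omega)).symm
      have hwadj2 : H.Adj w (p (a₀ + 2)) := by
        have h' := hpadjH (a₀ + 1) (by omega)
        rwa [(by omega : a₀ + 1 + 1 = a₀ + 2)] at h'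
      have hsubset : insert w S ⊆ (H.neighborSet (p a₀)) ∩ (H.neighborSet (p (a₀ + 2))) := by
        intro x hx
        rcases Set.mem_insert_iff.1 hx with rfl | hxS
        · exact ⟨hwadj1.symm, hwadj2.symm⟩
        · have h1 := hfan x hxS a₀ (by omega)
          have h2 := hfan x hxS (a₀ + 2) (by omega)
          exact ⟨h1.symm, h2.symm⟩
      have hwS : w ∉ S := by
        intro hwS
        obtain ⟨hsu, hsv⟩ := hSmem w hwS
        by_cases ha0 : a₀ = 0
        · apply hpnon (a₀ + 1) k (by omega) (le_refl _)
          have : H.Adj (p k) w := by rw [hpk]; exact hsu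
          exact this.symm
        · apply hpnon 0 (a₀ + 1) (by omega) (by omega)
          have : H.Adj (p 0) w := by rw [hp0]; exact hsv
          exact this
      have hfin : ((H.neighborSet (p a₀)) ∩ (H.neighborSet (p (a₀ + 2)))).Finite :=
        Set.toFinite _
      have hSfin : S.Finite := Set.toFinite _
      have hc1 : (insert w S).ncard = S.ncard + 1 := Set.ncard_insert_of_notMem hwS hSfin
      have hc2 := Set.ncard_le_ncard hsubset hfin
      omega
    · -- a minimal chord of span ≥ 3 yields an induced cycle in G'
      apply not_chordal_of_cycle G' (d₀ + 1) (by omega) (fun t => p (a₀ + t)) ?_ ?_ ?_ ?_ hG'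
      · intro a b hA hB hab
        have := hpinj (a₀ + a) (a₀ + b) (by omega) (by omega) hab
        omega
      · intro t ht
        have h' := hpadjG (a₀ + t) (by omega)
        rwa [(by omega : a₀ + t + 1 = a₀ + (t + 1))] at h'
      · show G'.Adj (p (a₀ + (d₀ + 1 - 1))) (p (a₀ + 0))
        rw [(by omega : d₀ + 1 - 1 = d₀), (by omega : a₀ + 0 = a₀)]
        exact ha₀adj.symm
      · intro x y hxy hym hne hadj
        have hyx : y - x < d₀ := by
          by_cases hx : x = 0
          · subst hx
            have : y ≠ d₀ := fun h => hne ⟨rfl, h⟩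
            omega
          · omega
        have hmem : y - x ∈ A := by
          refine ⟨by omega, a₀ + x, by omega, ?_, ?_⟩
          · rintro ⟨h1, h2⟩
            omega
          · rwa [(by omega : a₀ + x + (y - x) = a₀ + y)]
        have := Nat.sInf_le hmem
        omega
  · -- no chord at all: the whole cycle is induced in G'
    rw [Set.not_nonempty_iff_eq_empty] at hAne
    apply not_chordal_of_cycle G' (k + 1) (by omega) p ?_ ?_ ?_ ?_ hG'
    · intro a b hA hB hab
      exact hpinj a b (by omega) (by omega) hab
    · intro t ht
      exact hpadjG t (by omega)
    · show G'.Adj (p (k + 1 - 1)) (p 0)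
      rwa [(by omega : k + 1 - 1 = k)]
    · intro a b hab hbm hne hadj
      have hmem : b - a ∈ A := by
        refine ⟨by omega, a, by omega, ?_, ?_⟩
        · rintro ⟨h1, h2⟩
          exact hne ⟨h1, by omega⟩
        · rwa [(by omega : a + (b - a) = b)]
      rw [hAne] at hmem
      exact hmem

end Core
section Rest

variable {V : Type*} [Fintype V]

lemma exists_D_pair {G' H : SimpleGraph V} (hle : H ≤ G') (hne : H ≠ G') :
    ∃ u v : V, G'.Adj u v ∧ ¬ H.Adj u v := by
  by_contra hc
  push_neg at hc
  exact hne (le_antisymm hle (fun a b hab => hc a b hab))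

/-- Addition lemma: one can add a single edge of `G' \ H` to `H` keeping chordality. -/
lemma addition_lemma {G' H : SimpleGraph V} (hG' : Chordal G') (hH : Chordal H)
    (hle : H ≤ G') (hne : H ≠ G') :
    ∃ u v : V, G'.Adj u v ∧ ¬ H.Adj u v ∧ Chordal (H ⊔ fromEdgeSet {s(u, v)}) := by
  classical
  set c : V × V → ℕ :=
    fun ab => ((H.neighborSet ab.1) ∩ (H.neighborSet ab.2)).ncard with hcdef
  set P : Finset (V × V) :=
    Finset.univ.filter (fun ab => G'.Adj ab.1 ab.2 ∧ ¬ H.Adj ab.1 ab.2) with hPdef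
  have hPne : P.Nonempty := by
    obtain ⟨u, v, h1, h2⟩ := exists_D_pair hle hne
    exact ⟨(u, v), by simp [hPdef, h1, h2]⟩
  obtain ⟨⟨u, v⟩, hmem, hmax⟩ := P.exists_max_image c hPne
  simp only [hPdef, Finset.mem_filter, Finset.mem_univ, true_and] at hmem
  obtain ⟨hGuv, hHuv⟩ := hmem
  have hmax' : ∀ a b : V, G'.Adj a b → ¬ H.Adj a b →
      ((H.neighborSet a) ∩ (H.neighborSet b)).ncard ≤
        ((H.neighborSet u) ∩ (H.neighborSet v)).ncard := by
    intro a b h1 h2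
    exact hmax (a, b) (by simp [hPdef, h1, h2])
  refine ⟨u, v, hGuv, hHuv, ?_⟩
  by_contra hnc
  unfold Chordal at hnc
  push_neg at hnc
  obtain ⟨n, hn4, f, hf⟩ := hnc
  obtain ⟨hfinj, hfadj⟩ := hf
  -- the cycle must traverse the new edge
  have hex : ∃ i₀ : ZMod n, (f i₀ = u ∧ f (i₀ + 1) = v) ∨ (f i₀ = v ∧ f (i₀ + 1) = u) := by
    by_contra hno
    push_neg at hno
    apply hH n hn4 f
    refine ⟨hfinj, fun i j => ⟨?_, ?_⟩⟩
    · intro hadj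
      exact (hfadj i j).1 ((sup_adj _ _ _ _).2 (Or.inl hadj))
    · intro hcons
      have hadj' := (hfadj i j).2 hcons
      rcases (sup_adj _ _ _ _).1 hadj' with h | h
      · exact h
      · exfalso
        rw [fromEdgeSet_adj] at h
        obtain ⟨hmem', -⟩ := h
        simp only [Set.mem_singleton_iff, Sym2.eq_iff] at hmem'
        rcases hcons with rfl | rfl
        · rcases hmem' with ⟨h1, h2⟩ | ⟨h1, h2⟩
          · exact (hno i).1 h1 h2
          · exact (hno i).2 h1 h2
        · rcases hmem' with ⟨h1, h2⟩ | ⟨h1, h2⟩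
          · exact (hno j).2 h2 h1
          · exact (hno j).1 h2 h1
  obtain ⟨i₀, hcase⟩ := hex
  rcases hcase with ⟨h1, h2⟩ | ⟨h1, h2⟩
  · exact addition_core hG' hH hle hGuv hHuv hmax' hn4 hfinj hfadj h1 h2
  · -- swapped orientation: apply the core lemma with `u` and `v` exchanged
    have hsw : ({s(v, u)} : Set (Sym2 V)) = {s(u, v)} := by rw [Sym2.eq_swap]
    apply addition_core hG' hH hle hGuv.symm (fun h => hHuv h.symm) ?_ hn4 hfinj ?_ h1 h2
    · intro a b ha hb
      rw [Set.inter_comm (H.neighborSet v)]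
      exact hmax' a b ha hb
    · rw [hsw]
      exact hfadj

/-- Deletion theorem: a chordal graph strictly between `H` and `G'` exists at distance one
below `G'`. -/
lemma deletion_main : ∀ (d : ℕ) (G' H : SimpleGraph V), Chordal G' → Chordal H → H ≤ G' →
    H ≠ G' → (G'.edgeSet \ H.edgeSet).ncard = d →
    ∃ u v : V, G'.Adj u v ∧ ¬ H.Adj u v ∧ Chordal (G'.deleteEdges {s(u, v)}) := by
  intro d
  induction d using Nat.strong_induction_on with
  | _ d IH =>
    intro G' H hG' hH hle hne hd
    have hDfin : (G'.edgeSet \ H.edgeSet).Finite := Set.toFinite _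
    have hDne : (G'.edgeSet \ H.edgeSet).Nonempty := by
      obtain ⟨u, v, h1, h2⟩ := exists_D_pair hle hne
      exact ⟨s(u, v), (mem_edgeSet G').2 h1, fun hmem => h2 ((mem_edgeSet H).1 hmem)⟩
    have hd1 : 1 ≤ d := by
      have := (Set.ncard_pos hDfin).2 hDne
      omega
    by_cases hdone : d = 1
    · -- base case: G' and H differ in exactly one edge
      obtain ⟨u, v, hGuv, hHuv⟩ := exists_D_pair hle hne
      obtain ⟨e, he⟩ := Set.ncard_eq_one.1 (by rw [hd, hdone])
      have huv_mem : s(u, v) ∈ G'.edgeSet \ H.edgeSet :=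
        ⟨(mem_edgeSet G').2 hGuv, fun hmem => hHuv ((mem_edgeSet H).1 hmem)⟩
      have huv_e : s(u, v) = e := by
        have := huv_mem
        rw [he] at this
        exact this
      have hgraph : G'.deleteEdges {s(u, v)} = H := by
        ext a b
        rw [deleteEdges_adj]
        constructor
        · rintro ⟨hab, hnotin⟩
          by_contra hnH
          have hmem : s(a, b) ∈ G'.edgeSet \ H.edgeSet :=
            ⟨(mem_edgeSet G').2 hab, fun hm => hnH ((mem_edgeSet H).1 hm)⟩
          rw [he, ← huv_e] at hmem
          exact hnotin hmem
        · intro hab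
          refine ⟨hle hab, ?_⟩
          intro hmem
          simp only [Set.mem_singleton_iff, Sym2.eq_iff] at hmem
          rcases hmem with ⟨rfl, rfl⟩ | ⟨rfl, rfl⟩
          · exact hHuv hab
          · exact hHuv hab.symm
      exact ⟨u, v, hGuv, hHuv, by rw [hgraph]; exact hH⟩
    · -- inductive step: add one edge to H
      obtain ⟨u₀, v₀, hG0, hH0, hch'⟩ := addition_lemma hG' hH hle hne
      set H' := H ⊔ fromEdgeSet {s(u₀, v₀)} with hH'def
      have hle2 : fromEdgeSet {s(u₀, v₀)} ≤ G' := by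
        intro a b hab
        rw [fromEdgeSet_adj] at hab
        obtain ⟨hmem, -⟩ := hab
        simp only [Set.mem_singleton_iff, Sym2.eq_iff] at hmem
        rcases hmem with ⟨rfl, rfl⟩ | ⟨rfl, rfl⟩
        · exact hG0
        · exact hG0.symm
      have hle' : H' ≤ G' := sup_le hle hle2
      have hedge : H'.edgeSet = H.edgeSet ∪ {s(u₀, v₀)} := by
        rw [hH'def, edgeSet_sup, edgeSet_fromEdgeSet]
        congr 1
        ext e
        simp only [Set.mem_diff, Set.mem_singleton_iff, Set.mem_setOf_eq]
        constructor
        · rintro ⟨rfl, -⟩; rfl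
        · rintro rfl
          exact ⟨rfl, by rw [Sym2.mem_diagSet, Sym2.mk_isDiag_iff]; exact hG0.ne⟩
      have hdiff : G'.edgeSet \ H'.edgeSet = (G'.edgeSet \ H.edgeSet) \ {s(u₀, v₀)} := by
        rw [hedge, Set.diff_diff]
      have hmem0 : s(u₀, v₀) ∈ G'.edgeSet \ H.edgeSet :=
        ⟨(mem_edgeSet G').2 hG0, fun hm => hH0 ((mem_edgeSet H).1 hm)⟩
      have hcard : (G'.edgeSet \ H'.edgeSet).ncard = d - 1 := by
        rw [hdiff, Set.ncard_diff_singleton_of_mem hmem0, hd]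
      have hne' : H' ≠ G' := by
        intro heq
        have h0 : (G'.edgeSet \ H'.edgeSet).ncard = 0 := by
          rw [heq]
          simp
        omega
      obtain ⟨w, x, hw1, hw2, hw3⟩ :=
        IH (d - 1) (by omega) G' H' hG' hch' hle' hne' hcard
      refine ⟨w, x, hw1, ?_, hw3⟩
      intro hadj
      exact hw2 ((sup_adj _ _ _ _).2 (Or.inl hadj))

end Rest

theorem stmt_18 {V : Type*} [Fintype V] (G G' : SimpleGraph V)
    (h : ChordalCompletion G G') (hnm : ¬ MinimalChordalCompletion G G') :
    ∃ u v : V, G'.Adj u v ∧ ¬ G.Adj u v ∧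
      Chordal (G'.deleteEdges {s(u, v)}) := by
  rw [MinimalChordalCompletion] at hnm
  push_neg at hnm
  obtain ⟨H, hHcc, hHle, hHne⟩ := hnm h
  obtain ⟨u, v, h1, h2, h3⟩ :=
    deletion_main (G'.edgeSet \ H.edgeSet).ncard G' H h.1 hHcc.1 hHle hHne rfl
  exact ⟨u, v, h1, fun hG => h2 (hHcc.2 hG), h3⟩
end
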